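/- Let ξ = exp(iπ/5) ∈ ℂ. The set Q₂(2) = {Σ_{j=0}^{9} m_j ξ^j : m₀, …, m₉ ∈ ℕ, Σ_{j=0}^{9} m_j ≤ 2}, i.e. the set of all sums of at most two 10th roots of unity, contains exactly 61 distinct points. -/
import Mathlib

set_option maxRecDepth 20000


/-- ξ = exp(iπ/5), a primitive 10th root of unity. -/
noncomputable def xi : ℂ := Complex.exp (Real.pi * Complex.I / 5)

/-- The H₂^aff-induced quasicrystal fragment with cut-off parameter n. -/
noncomputable def Q2 (n : ℕ) : Set ℂ :=
  {z : ℂ | ∃ m : Fin 10 → ℕ, (∑ j, m j) ≤ n ∧ z = ∑ j, (m j : ℂ) * xi ^ (j : ℕ)}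

lemma xi_prim : IsPrimitiveRoot xi 10 := by
  have h := Complex.isPrimitiveRoot_exp 10 (by norm_num)
  have e : (2 * (Real.pi : ℂ) * Complex.I / (10 : ℕ)) = Real.pi * Complex.I / 5 := by
    push_cast
    ring
  rwa [e] at h

lemma xi_pow_five : xi ^ 5 = -1 := by
  have : xi ^ 5 = Complex.exp (Real.pi * Complex.I) := by
    rw [xi, ← Complex.exp_nat_mul]
    ring_nf
  rw [this, Complex.exp_pi_mul_I]

lemma xi_ne_neg_one : xi ≠ -1 := by
  intro h
  have h2 : xi ^ 2 = 1 := by rw [h]; ring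
  have := xi_prim.dvd_of_pow_eq_one 2 h2
  norm_num at this

lemma xi_min : xi ^ 4 - xi ^ 3 + xi ^ 2 - xi + 1 = 0 := by
  have hfac : (xi + 1) * (xi ^ 4 - xi ^ 3 + xi ^ 2 - xi + 1) = 0 := by
    linear_combination xi_pow_five
  rcases mul_eq_zero.mp hfac with h | h
  · exact absurd (eq_neg_of_add_eq_zero_left h) xi_ne_neg_one
  · exact h

/-- Coordinates map: (a,b,c,d) ↦ a + bξ + cξ² + dξ³. -/
noncomputable def cmap (v : ℤ × ℤ × ℤ × ℤ) : ℂ :=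
  (v.1 : ℂ) + (v.2.1 : ℂ) * xi + (v.2.2.1 : ℂ) * xi ^ 2 + (v.2.2.2 : ℂ) * xi ^ 3

lemma cmap_add (u v : ℤ × ℤ × ℤ × ℤ) : cmap (u + v) = cmap u + cmap v := by
  simp only [cmap, Prod.fst_add, Prod.snd_add]
  push_cast
  ring

lemma minpoly_deg : (minpoly ℚ xi).natDegree = 4 := by
  rw [← Polynomial.cyclotomic_eq_minpoly_rat xi_prim (by norm_num),
    Polynomial.natDegree_cyclotomic]
  decide

lemma indep (a b c d : ℚ) (h : (a : ℂ) + b * xi + c * xi ^ 2 + d * xi ^ 3 = 0) :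
    a = 0 ∧ b = 0 ∧ c = 0 ∧ d = 0 := by
  have li := linearIndependent_pow (K := ℚ) xi
  rw [minpoly_deg] at li
  have key := Fintype.linearIndependent_iff.mp li ![a, b, c, d] ?_
  · exact ⟨key 0, key 1, key 2, key 3⟩
  · rw [Fin.sum_univ_four]
    show (a : ℚ) • (xi ^ (0 : ℕ)) + (b : ℚ) • xi ^ (1 : ℕ) + (c : ℚ) • xi ^ (2 : ℕ)
      + (d : ℚ) • xi ^ (3 : ℕ) = 0
    simp only [Rat.smul_def]
    linear_combination h

lemma cmap_inj : Function.Injective cmap := by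
  intro u v huv
  have h : ((u.1 - v.1 : ℚ) : ℂ) + ((u.2.1 - v.2.1 : ℚ) : ℂ) * xi
      + ((u.2.2.1 - v.2.2.1 : ℚ) : ℂ) * xi ^ 2 + ((u.2.2.2 - v.2.2.2 : ℚ) : ℂ) * xi ^ 3 = 0 := by
    simp only [cmap] at huv
    push_cast
    linear_combination huv
  obtain ⟨h1, h2, h3, h4⟩ := indep _ _ _ _ h
  have e1 : u.1 = v.1 := by exact_mod_cast sub_eq_zero.mp (by exact_mod_cast h1)
  have e2 : u.2.1 = v.2.1 := by exact_mod_cast sub_eq_zero.mp (by exact_mod_cast h2)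
  have e3 : u.2.2.1 = v.2.2.1 := by exact_mod_cast sub_eq_zero.mp (by exact_mod_cast h3)
  have e4 : u.2.2.2 = v.2.2.2 := by exact_mod_cast sub_eq_zero.mp (by exact_mod_cast h4)
  exact Prod.ext e1 (Prod.ext e2 (Prod.ext e3 e4))

/-- Coordinates of ξ^j for j = 0,…,9. -/
def vv : Fin 10 → ℤ × ℤ × ℤ × ℤ :=
  ![(1,0,0,0), (0,1,0,0), (0,0,1,0), (0,0,0,1), (-1,1,-1,1),
    (-1,0,0,0), (0,-1,0,0), (0,0,-1,0), (0,0,0,-1), (1,-1,1,-1)]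

lemma cmap_vv (j : Fin 10) : cmap (vv j) = xi ^ (j : ℕ) := by
  have h5 := xi_pow_five
  have h4 := xi_min
  fin_cases j
  · show cmap (1,0,0,0) = xi ^ 0
    simp [cmap]
  · show cmap (0,1,0,0) = xi ^ 1
    simp [cmap]
  · show cmap (0,0,1,0) = xi ^ 2
    simp [cmap]
  · show cmap (0,0,0,1) = xi ^ 3
    simp [cmap]
  · show cmap (-1,1,-1,1) = xi ^ 4
    simp only [cmap]
    push_cast
    linear_combination -h4
  · show cmap (-1,0,0,0) = xi ^ 5
    simp only [cmap]
    push_cast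
    linear_combination -h5
  · show cmap (0,-1,0,0) = xi ^ 6
    simp only [cmap]
    push_cast
    linear_combination -xi * h5
  · show cmap (0,0,-1,0) = xi ^ 7
    simp only [cmap]
    push_cast
    linear_combination -xi ^ 2 * h5
  · show cmap (0,0,0,-1) = xi ^ 8
    simp only [cmap]
    push_cast
    linear_combination -xi ^ 3 * h5
  · show cmap (1,-1,1,-1) = xi ^ 9
    simp only [cmap]
    push_cast
    linear_combination h4 - xi ^ 4 * h5

def V : Finset (ℤ × ℤ × ℤ × ℤ) :=
  insert 0 ((Finset.univ.image vv) ∪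
    ((Finset.univ ×ˢ Finset.univ).image fun p : Fin 10 × Fin 10 => vv p.1 + vv p.2))

lemma zero_mem_Q2 (n : ℕ) : (0 : ℂ) ∈ Q2 n :=
  ⟨0, by simp, by simp⟩

lemma Q2_mono (n : ℕ) : Q2 n ⊆ Q2 (n + 1) := by
  rintro z ⟨m, hm, hz⟩
  exact ⟨m, hm.trans (Nat.le_succ n), hz⟩

lemma sum_update_mul (m : Fin 10 → ℕ) (i : Fin 10) (b : ℕ) :
    ∑ j, ((Function.update m i b j : ℕ) : ℂ) * xi ^ (j : ℕ)
      = (b : ℂ) * xi ^ (i : ℕ) + ∑ j ∈ Finset.univ.erase i, ((m j : ℕ) : ℂ) * xi ^ (j : ℕ) := by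
  rw [← Finset.add_sum_erase Finset.univ
    (fun j => ((Function.update m i b j : ℕ) : ℂ) * xi ^ (j : ℕ)) (Finset.mem_univ i)]
  rw [Function.update_self]
  congr 1
  exact Finset.sum_congr rfl fun j hj => by
    rw [Function.update_of_ne (Finset.ne_of_mem_erase hj)]

lemma Q2_add {z : ℂ} {n : ℕ} (hz : z ∈ Q2 n) (j : Fin 10) :
    z + xi ^ (j : ℕ) ∈ Q2 (n + 1) := by
  obtain ⟨m, hm, rfl⟩ := hz
  refine ⟨Function.update m j (m j + 1), ?_, ?_⟩
  · rw [Finset.sum_update_of_mem (Finset.mem_univ j)]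
    have := Finset.add_sum_erase Finset.univ m (Finset.mem_univ j)
    simp only [Finset.sdiff_singleton_eq_erase]
    omega
  · rw [sum_update_mul m j (m j + 1),
      ← Finset.add_sum_erase Finset.univ (fun k => ((m k : ℕ) : ℂ) * xi ^ (k : ℕ))
        (Finset.mem_univ j)]
    push_cast
    ring

lemma mem_Q2_succ {z : ℂ} {n : ℕ} :
    z ∈ Q2 (n + 1) ↔ z ∈ Q2 n ∨ ∃ w ∈ Q2 n, ∃ j : Fin 10, z = w + xi ^ (j : ℕ) := by
  constructor
  · rintro ⟨m, hm, rfl⟩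
    by_cases h : (∑ j, m j) ≤ n
    · exact Or.inl ⟨m, h, rfl⟩
    · have hs : ∑ j, m j = n + 1 := le_antisymm hm (not_le.mp h)
      obtain ⟨i, hi⟩ : ∃ i, m i ≠ 0 := by
        by_contra hc
        push_neg at hc
        simp [hc] at hs
      set m' := Function.update m i (m i - 1) with hm'
      refine Or.inr ⟨∑ j, (m' j : ℂ) * xi ^ (j : ℕ), ⟨m', ?_, rfl⟩, i, ?_⟩
      · rw [hm', Finset.sum_update_of_mem (Finset.mem_univ i)]
        have := Finset.add_sum_erase Finset.univ m (Finset.mem_univ i)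
        simp only [Finset.sdiff_singleton_eq_erase]
        omega
      · rw [hm', sum_update_mul m i (m i - 1),
          ← Finset.add_sum_erase Finset.univ (fun k => ((m k : ℕ) : ℂ) * xi ^ (k : ℕ))
            (Finset.mem_univ i)]
        have hcast : ((m i - 1 : ℕ) : ℂ) = (m i : ℂ) - 1 := by
          have h1 : 1 ≤ m i := Nat.one_le_iff_ne_zero.mpr hi
          push_cast [Nat.cast_sub h1]
          ring
        rw [hcast]
        ring
  · rintro (h | ⟨w, hw, j, rfl⟩)
    · exact Q2_mono n h
    · exact Q2_add hw j

lemma Q2_zero : Q2 0 = {0} := by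
  ext z
  constructor
  · rintro ⟨m, hm, rfl⟩
    have : ∀ j, m j = 0 := by
      intro j
      have := Finset.sum_eq_zero_iff.mp (Nat.le_zero.mp hm) j (Finset.mem_univ j)
      exact this
    simp [this]
  · rintro rfl
    exact zero_mem_Q2 0

lemma Q2_two_eq : Q2 2 = cmap '' ↑V := by
  have memV_zero : (0 : ℤ × ℤ × ℤ × ℤ) ∈ V := Finset.mem_insert_self _ _
  have memV_single : ∀ j : Fin 10, vv j ∈ V := fun j =>
    Finset.mem_insert_of_mem (Finset.mem_union_left _ (Finset.mem_image_of_mem _ (Finset.mem_univ j)))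
  have memV_pair : ∀ i j : Fin 10, vv i + vv j ∈ V := fun i j =>
    Finset.mem_insert_of_mem (Finset.mem_union_right _
      (Finset.mem_image.mpr ⟨(i, j), Finset.mem_product.mpr ⟨Finset.mem_univ _, Finset.mem_univ _⟩, rfl⟩))
  ext z
  constructor
  · intro hz
    rcases mem_Q2_succ.mp hz with h1 | ⟨w, hw, j, rfl⟩
    · rcases mem_Q2_succ.mp h1 with h0 | ⟨w, hw, j, rfl⟩
      · rw [Q2_zero] at h0
        refine ⟨0, memV_zero, ?_⟩
        simp only [Set.mem_singleton_iff] at h0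
        simp [h0, cmap]
      · rw [Q2_zero] at hw
        simp only [Set.mem_singleton_iff] at hw
        subst hw
        exact ⟨vv j, memV_single j, by rw [cmap_vv]; ring⟩
    · rcases mem_Q2_succ.mp hw with h0 | ⟨w', hw', i, rfl⟩
      · rw [Q2_zero] at h0
        simp only [Set.mem_singleton_iff] at h0
        subst h0
        exact ⟨vv j, memV_single j, by rw [cmap_vv]; ring⟩
      · rw [Q2_zero] at hw'
        simp only [Set.mem_singleton_iff] at hw'
        subst hw'
        refine ⟨vv i + vv j, memV_pair i j, ?_⟩
        rw [cmap_add, cmap_vv, cmap_vv]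
        ring
  · rintro ⟨v, hv, rfl⟩
    rcases Finset.mem_insert.mp hv with rfl | hv'
    case inl =>
      have : cmap 0 = 0 := by simp [cmap]
      rw [this]
      exact zero_mem_Q2 2
    rcases Finset.mem_union.mp hv' with h1 | h2
    · obtain ⟨j, -, rfl⟩ := Finset.mem_image.mp h1
      rw [cmap_vv]
      have : xi ^ (j : ℕ) = 0 + xi ^ (j : ℕ) := by ring
      rw [this]
      exact Q2_mono 1 (Q2_add (zero_mem_Q2 0) j)
    · obtain ⟨⟨i, j⟩, -, rfl⟩ := Finset.mem_image.mp h2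
      rw [cmap_add, cmap_vv, cmap_vv]
      have h1 : xi ^ (i : ℕ) ∈ Q2 1 := by
        have : xi ^ (i : ℕ) = 0 + xi ^ (i : ℕ) := by ring
        rw [this]
        exact Q2_add (zero_mem_Q2 0) i
      exact Q2_add h1 j


/-- The set Q₂(2) of all sums of at most two 10th roots of unity
contains exactly 61 points. -/
theorem Q2_two_card : Set.ncard (Q2 2) = 61 := by
  rw [Q2_two_eq, Set.ncard_image_of_injective _ cmap_inj, Set.ncard_coe_finset]
  decide
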